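/- Let G be a game with no cycle of total weight zero, let F be a set of vertices containing N = N_G such that the supΣ^N-value is finite on F, let H be the subgame obtained by removing F from G (assumed to be a subgame), let φ_H be a reducing potential for H, and let H^+ = ZP_{φ_H}. Assume there is an edge from H^+ ∩ V_Min to F, and let m be the minimal value of w(vv') + supΣ^N-value(v') − φ_H(v) over such edges. Call an edge vv' a good escape if it goes from H^+ to F and satisfies w(vv') + supΣ^N-value(v') − φ_H(v) ≤ m. Let S be the set of vertices of H^+ from which, in G, Min has a strategy ensuring that the play visits only edges of φ_H-modified weight ≤ 0 while remaining in H^+, and either stays forever in H^+ or exits via a good escape. Then for every vertex v ∈ S we have supΣ^N-value(v) = m + φ_H(v). -/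

import Mathlib

/-!
Basic definitions for mean-payoff games: games, infinite paths, positional
strategies, the valuations MP, supΣ^X and infΣ^X, values of vertices,
zones N, P, ZN, ZP (also relative to a sub-arena), reduced games,
potentials and potential reductions, traps.
-/

/-- A game: a sinkless directed graph with integer weights, whose vertices are
partitioned into Min-vertices (`IsMin`) and Max-vertices (`¬ IsMin`). -/
structure MPGame (V : Type*) where
  E : V → V → Prop
  w : V → V → ℤ
  IsMin : V → Prop
  sinkless : ∀ v, ∃ v', E v v'

namespace MPGame

variable {V : Type*}

/-- An infinite path in a game. -/
structure Path (G : MPGame V) where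
  vert : ℕ → V
  adj : ∀ i, G.E (vert i) (vert (i + 1))

/-- The sum of the weights of the first `k` edges of a path. -/
def Path.wsum {G : MPGame V} (π : G.Path) (k : ℕ) : ℤ :=
  ∑ i ∈ Finset.range k, G.w (π.vert i) (π.vert (i + 1))

/-- The tail of a path (drop the first vertex). -/
def Path.tail {G : MPGame V} (π : G.Path) : G.Path :=
  ⟨fun i => π.vert (i + 1), fun i => π.adj (i + 1)⟩

/-- A positional strategy `σ : V → V` is legal if it always follows an edge. -/
def Legal (G : MPGame V) (σ : V → V) : Prop := ∀ v, G.E v (σ v)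

/-- Consistency of a path with a positional Min-strategy. -/
def Path.ConsMin {G : MPGame V} (π : G.Path) (σ : V → V) : Prop :=
  ∀ i, G.IsMin (π.vert i) → π.vert (i + 1) = σ (π.vert i)

/-- Consistency of a path with a positional Max-strategy. -/
def Path.ConsMax {G : MPGame V} (π : G.Path) (τ : V → V) : Prop :=
  ∀ i, ¬ G.IsMin (π.vert i) → π.vert (i + 1) = τ (π.vert i)

/-- The mean-payoff valuation `MP(π) = limsup_k (1/k) ∑_{i<k} w_i`. -/
noncomputable def MP {G : MPGame V} (π : G.Path) : EReal :=
  Filter.limsup (fun k => (((π.wsum k : ℝ) / (k : ℝ)) : EReal)) Filter.atTop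

/-- `supΣ^X(π) = sup_{k ≤ n_X} ∑_{i<k} w_i`, where `n_X` is the first hitting
time of `X` (all `k` if `X` is never hit). -/
noncomputable def supSigma {G : MPGame V} (X : Set V) (π : G.Path) : EReal :=
  ⨆ k : {k : ℕ // ∀ i < k, π.vert i ∉ X}, ((π.wsum k.1 : ℝ) : EReal)

/-- `infΣ^X(π) = inf_{k ≤ n_X} ∑_{i<k} w_i`. -/
noncomputable def infSigma {G : MPGame V} (X : Set V) (π : G.Path) : EReal :=
  ⨅ k : {k : ℕ // ∀ i < k, π.vert i ∉ X}, ((π.wsum k.1 : ℝ) : EReal)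

/-- `inf_σ sup_{π ⊨ σ, π from v} val(π)`, over legal positional Min-strategies. -/
noncomputable def minVal (G : MPGame V) (val : G.Path → EReal) (v : V) : EReal :=
  ⨅ σ : {σ : V → V // G.Legal σ},
    ⨆ π : {π : G.Path // π.vert 0 = v ∧ π.ConsMin σ.1}, val π.1

/-- `sup_τ inf_{π ⊨ τ, π from v} val(π)`, over legal positional Max-strategies. -/
noncomputable def maxVal (G : MPGame V) (val : G.Path → EReal) (v : V) : EReal :=
  ⨆ τ : {τ : V → V // G.Legal τ},
    ⨅ π : {π : G.Path // π.vert 0 = v ∧ π.ConsMax τ.1}, val π.1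

/-- The MP-value of a vertex. -/
noncomputable def MPval (G : MPGame V) (v : V) : EReal := G.minVal MP v

/-- The `supΣ^X`-value of a vertex. -/
noncomputable def supSigmaVal (G : MPGame V) (X : Set V) (v : V) : EReal :=
  G.minVal (supSigma X) v

/-- The `infΣ^X`-value of a vertex. -/
noncomputable def infSigmaVal (G : MPGame V) (X : Set V) (v : V) : EReal :=
  G.minVal (infSigma X) v

/-- `G` has no cycle of total weight zero: no path repeats a vertex with the
same partial sum of weights. -/
def NoZeroCycle (G : MPGame V) : Prop :=
  ∀ (π : G.Path) (i j : ℕ), i < j → π.vert i = π.vert j → π.wsum i ≠ π.wsum j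

/-- The zone `N` of the subgame of `G` induced on `D`: vertices whose
immediately optimal edges (within `D`) have weight `< 0`. -/
def NsetOn (G : MPGame V) (D : Set V) : Set V :=
  {v | v ∈ D ∧ ((G.IsMin v ∧ ∃ v' ∈ D, G.E v v' ∧ G.w v v' < 0) ∨
      (¬ G.IsMin v ∧ ∀ v' ∈ D, G.E v v' → G.w v v' < 0))}

/-- The zone `P` of the subgame of `G` induced on `D`. -/
def PsetOn (G : MPGame V) (D : Set V) : Set V :=
  {v | v ∈ D ∧ ((¬ G.IsMin v ∧ ∃ v' ∈ D, G.E v v' ∧ 0 < G.w v v') ∨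
      (G.IsMin v ∧ ∀ v' ∈ D, G.E v v' → 0 < G.w v v'))}

/-- The zone `N` of `G`. -/
def Nset (G : MPGame V) : Set V := G.NsetOn Set.univ

/-- The zone `P` of `G`. -/
def Pset (G : MPGame V) : Set V := G.PsetOn Set.univ

/-- The zone `ZN` of the subgame of `G` induced on `D`: vertices from which
Min can force that an edge of weight `< 0` is visited before any edge of
weight `> 0` (staying within `D`). -/
inductive ZNr (G : MPGame V) (D : Set V) : V → Prop
  | minNeg (v v' : V) : v ∈ D → G.IsMin v → v' ∈ D → G.E v v' → G.w v v' < 0 →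
      ZNr G D v
  | minZero (v v' : V) : v ∈ D → G.IsMin v → v' ∈ D → G.E v v' → G.w v v' = 0 →
      ZNr G D v' → ZNr G D v
  | max (v : V) : v ∈ D → ¬ G.IsMin v →
      (∀ v' ∈ D, G.E v v' → G.w v v' ≤ 0) →
      (∀ v', v' ∈ D → G.E v v' → G.w v v' = 0 → ZNr G D v') →
      ZNr G D v

/-- The zone `ZP` of the subgame of `G` induced on `D`. -/
inductive ZPr (G : MPGame V) (D : Set V) : V → Prop
  | maxPos (v v' : V) : v ∈ D → ¬ G.IsMin v → v' ∈ D → G.E v v' → 0 < G.w v v' →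
      ZPr G D v
  | maxZero (v v' : V) : v ∈ D → ¬ G.IsMin v → v' ∈ D → G.E v v' → G.w v v' = 0 →
      ZPr G D v' → ZPr G D v
  | min (v : V) : v ∈ D → G.IsMin v →
      (∀ v' ∈ D, G.E v v' → 0 ≤ G.w v v') →
      (∀ v', v' ∈ D → G.E v v' → G.w v v' = 0 → ZPr G D v') →
      ZPr G D v

/-- The zone `ZN` of `G`. -/
def ZN (G : MPGame V) : V → Prop := G.ZNr Set.univ

/-- The zone `ZP` of `G`. -/
def ZP (G : MPGame V) : V → Prop := G.ZPr Set.univ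

/-- The subgame of `G` induced on `D` is reduced: from every vertex of `ZN`,
Min can force that the first edge visited has weight `≤ 0` and leads into
`ZN`, and symmetrically for `ZP` and Max. -/
def ReducedOn (G : MPGame V) (D : Set V) : Prop :=
  (∀ v, G.ZNr D v →
     (G.IsMin v → ∃ v' ∈ D, G.E v v' ∧ G.w v v' ≤ 0 ∧ G.ZNr D v') ∧
     (¬ G.IsMin v → ∀ v' ∈ D, G.E v v' → G.w v v' ≤ 0 ∧ G.ZNr D v')) ∧
  (∀ v, G.ZPr D v →
     (¬ G.IsMin v → ∃ v' ∈ D, G.E v v' ∧ 0 ≤ G.w v v' ∧ G.ZPr D v') ∧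
     (G.IsMin v → ∀ v' ∈ D, G.E v v' → 0 ≤ G.w v v' ∧ G.ZPr D v'))

/-- `G` is reduced. -/
def Reduced (G : MPGame V) : Prop := G.ReducedOn Set.univ

/-- The subgame of `G` induced on `D` is positively reduced: `ZN = ∅`. -/
def PosReducedOn (G : MPGame V) (D : Set V) : Prop := ∀ v, ¬ G.ZNr D v

/-- `A` is a trap for Min: a sinkless subgraph from which Min cannot escape. -/
def TrapForMin (G : MPGame V) (A : Set V) : Prop :=
  (∀ v ∈ A, ∃ v' ∈ A, G.E v v') ∧
  ∀ v ∈ A, G.IsMin v → ∀ v', G.E v v' → v' ∈ A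

/-- `A` is a trap for Max: a sinkless subgraph from which Max cannot escape. -/
def TrapForMax (G : MPGame V) (A : Set V) : Prop :=
  (∀ v ∈ A, ∃ v' ∈ A, G.E v v') ∧
  ∀ v ∈ A, ¬ G.IsMin v → ∀ v', G.E v v' → v' ∈ A

/-- The potential reduction of `G` by the potential `φ`. -/
def pot (G : MPGame V) (φ : V → ℤ) : MPGame V where
  E := G.E
  w := fun v v' => G.w v v' + φ v' - φ v
  IsMin := G.IsMin
  sinkless := G.sinkless

end MPGame
namespace MPGame

variable {V : Type*}

lemma ZPr.mem_dom {G : MPGame V} {D : Set V} {x : V} (h : G.ZPr D x) : x ∈ D := by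
  cases h <;> assumption

lemma Path.wsum_zero {G : MPGame V} (π : G.Path) : π.wsum 0 = 0 :=
  Finset.sum_range_zero _

lemma Path.wsum_succ {G : MPGame V} (π : G.Path) (k : ℕ) :
    π.wsum (k + 1) = π.wsum k + G.w (π.vert k) (π.vert (k + 1)) :=
  Finset.sum_range_succ _ _

/-- The path obtained by iterating a legal strategy. -/
def sPath (G : MPGame V) (σ : V → V) (hσ : G.Legal σ) (x : V) : G.Path :=
  ⟨fun i => σ^[i] x, fun i => by
    show G.E (σ^[i] x) (σ^[i+1] x)
    rw [Function.iterate_succ_apply']; exact hσ _⟩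

@[simp] lemma sPath_vert_zero (G : MPGame V) (σ : V → V) (hσ : G.Legal σ) (x : V) :
    (sPath G σ hσ x).vert 0 = x := rfl

lemma sPath_consMin (G : MPGame V) (σ : V → V) (hσ : G.Legal σ) (x : V) :
    (sPath G σ hσ x).ConsMin σ := fun i _ => by
  show σ^[i+1] x = σ (σ^[i] x)
  rw [Function.iterate_succ_apply']

instance pathNonempty (G : MPGame V) (σ : {σ : V → V // G.Legal σ}) (x : V) :
    Nonempty {π : G.Path // π.vert 0 = x ∧ π.ConsMin σ.1} :=
  ⟨⟨sPath G σ.1 σ.2 x, rfl, sPath_consMin G σ.1 σ.2 x⟩⟩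

lemma supSigma_nonneg {G : MPGame V} (X : Set V) (π : G.Path) :
    0 ≤ supSigma X π := by
  have h := le_iSup (fun k : {k : ℕ // ∀ i < k, π.vert i ∉ X} =>
      ((π.wsum k.1 : ℝ) : EReal)) ⟨0, by simp⟩
  simpa [Path.wsum_zero, supSigma] using h

lemma supSigmaVal_nonneg (G : MPGame V) (X : Set V) (x : V) :
    0 ≤ G.supSigmaVal X x := by
  refine le_iInf fun σ' => ?_
  obtain ⟨π⟩ := pathNonempty G σ' x
  exact le_trans (supSigma_nonneg X π.1)
    (le_iSup (fun π : {π : G.Path // π.vert 0 = x ∧ π.ConsMin σ'.1} => supSigma X π.1) π)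

lemma add_iSup_le_of_forall {ι : Sort*} (c : ℝ) (f : ι → EReal) {A : EReal}
    (h : ∀ i, (c : EReal) + f i ≤ A) : (c : EReal) + ⨆ i, f i ≤ A := by
  have h2 : ⨆ i, f i ≤ A - (c : EReal) := iSup_le fun i =>
    (EReal.le_sub_iff_add_le (Or.inl (EReal.coe_ne_bot c)) (Or.inl (EReal.coe_ne_top c))).2
      (by rw [add_comm]; exact h i)
  rw [add_comm]
  exact (EReal.le_sub_iff_add_le (Or.inl (EReal.coe_ne_bot c))
    (Or.inl (EReal.coe_ne_top c))).1 h2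

/-- Prepending a vertex to a path. -/
def Path.consP {G : MPGame V} (x : V) (π : G.Path) (h : G.E x (π.vert 0)) : G.Path where
  vert i := match i with
    | 0 => x
    | (i + 1) => π.vert i
  adj i := match i with
    | 0 => h
    | (i + 1) => π.adj i

@[simp] lemma Path.consP_vert_zero {G : MPGame V} (x : V) (π : G.Path) (h : G.E x (π.vert 0)) :
    (Path.consP x π h).vert 0 = x := rfl

@[simp] lemma Path.consP_vert_succ {G : MPGame V} (x : V) (π : G.Path) (h : G.E x (π.vert 0))
    (i : ℕ) : (Path.consP x π h).vert (i + 1) = π.vert i := rfl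

lemma Path.consP_consMin {G : MPGame V} {x : V} {π : G.Path} {h : G.E x (π.vert 0)}
    {σ : V → V} (h0 : G.IsMin x → π.vert 0 = σ x) (hc : π.ConsMin σ) :
    (Path.consP x π h).ConsMin σ := by
  intro i
  match i with
  | 0 => exact h0
  | (i + 1) => exact hc i

lemma Path.consP_wsum {G : MPGame V} (x : V) (π : G.Path) (h : G.E x (π.vert 0)) (k : ℕ) :
    (Path.consP x π h).wsum (k + 1) = G.w x (π.vert 0) + π.wsum k := by
  unfold Path.wsum
  rw [Finset.sum_range_succ']
  have h1 : ∀ i : ℕ, (Path.consP x π h).vert (i + 1) = π.vert i := fun i => rfl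
  simp only [h1]
  rw [add_comm]
  rfl

end MPGame
namespace MPGame

variable {V : Type*}

/-- Splicing a path `ρ` onto the length-`k` prefix of `π`. -/
def Path.splice {G : MPGame V} (π : G.Path) (k : ℕ) (ρ : G.Path)
    (h : ρ.vert 0 = π.vert k) : G.Path where
  vert j := if j < k then π.vert j else ρ.vert (j - k)
  adj j := by
    rcases le_or_gt (j + 1) k with h1 | h1
    · have hj : j < k := h1
      rcases eq_or_lt_of_le h1 with h2 | h2
      · simp only [if_pos hj, if_neg (lt_irrefl k), h2, Nat.sub_self]
        rw [h, ← h2]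
        exact π.adj j
      · simp only [if_pos hj, if_pos h2]
        exact π.adj j
    · have hj : k ≤ j := Nat.lt_succ_iff.mp h1
      simp only [if_neg (not_lt.mpr hj), if_neg (not_lt.mpr (hj.trans (Nat.le_succ j)))]
      have h2 : j + 1 - k = (j - k) + 1 := by omega
      rw [h2]
      exact ρ.adj (j - k)

lemma Path.splice_vert_of_le {G : MPGame V} (π : G.Path) (k : ℕ) (ρ : G.Path)
    (h : ρ.vert 0 = π.vert k) {j : ℕ} (hj : j ≤ k) :
    (π.splice k ρ h).vert j = π.vert j := by
  rcases eq_or_lt_of_le hj with h1 | h1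
  · show (if j < k then π.vert j else ρ.vert (j - k)) = π.vert j
    subst h1
    rw [if_neg (by omega), Nat.sub_self, h]
  · show (if j < k then π.vert j else ρ.vert (j - k)) = π.vert j
    rw [if_pos h1]

lemma Path.splice_vert_add {G : MPGame V} (π : G.Path) (k : ℕ) (ρ : G.Path)
    (h : ρ.vert 0 = π.vert k) (t : ℕ) :
    (π.splice k ρ h).vert (k + t) = ρ.vert t := by
  show (if k + t < k then π.vert (k + t) else ρ.vert (k + t - k)) = ρ.vert t
  rw [if_neg (by omega)]
  congr 1
  omega

lemma Path.splice_consMin {G : MPGame V} {π : G.Path} {k : ℕ} {ρ : G.Path}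
    {h : ρ.vert 0 = π.vert k} {σ : V → V}
    (hπ : ∀ i, i + 1 ≤ k → G.IsMin (π.vert i) → π.vert (i + 1) = σ (π.vert i))
    (hρ : ρ.ConsMin σ) : (π.splice k ρ h).ConsMin σ := by
  intro i hi
  rcases le_or_gt (i + 1) k with h1 | h1
  · rw [Path.splice_vert_of_le π k ρ h h1, Path.splice_vert_of_le π k ρ h (by omega)] at *
    exact hπ i h1 hi
  · have hk : k ≤ i := by omega
    obtain ⟨t, rfl⟩ := Nat.exists_eq_add_of_le hk
    rw [show k + t + 1 = k + (t + 1) from rfl, Path.splice_vert_add, Path.splice_vert_add] at *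
    exact hρ t hi

lemma Path.splice_wsum {G : MPGame V} (π : G.Path) (k : ℕ) (ρ : G.Path)
    (h : ρ.vert 0 = π.vert k) (t : ℕ) :
    (π.splice k ρ h).wsum (k + t) = π.wsum k + ρ.wsum t := by
  induction t with
  | zero =>
    simp only [Path.wsum_zero, add_zero, Nat.add_zero]
    show (π.splice k ρ h).wsum k = π.wsum k
    unfold Path.wsum
    refine Finset.sum_congr rfl fun i hi => ?_
    rw [Finset.mem_range] at hi
    rw [Path.splice_vert_of_le π k ρ h (by omega), Path.splice_vert_of_le π k ρ h (by omega)]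
  | succ t ih =>
    rw [show k + (t + 1) = (k + t) + 1 from rfl, Path.wsum_succ, ih, Path.wsum_succ,
      Path.splice_vert_add, show k + t + 1 = k + (t + 1) from rfl, Path.splice_vert_add]
    ring

lemma cons_le_sup {G : MPGame V} {X : Set V} {σ' : V → V} {x y : V}
    (hx : x ∉ X) (hxy : G.E x y) (hmin : G.IsMin x → y = σ' x) :
    ((G.w x y : ℝ) : EReal) +
      (⨆ π' : {π' : G.Path // π'.vert 0 = y ∧ π'.ConsMin σ'}, supSigma X π'.1)
      ≤ ⨆ π : {π : G.Path // π.vert 0 = x ∧ π.ConsMin σ'}, supSigma X π.1 := by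
  apply add_iSup_le_of_forall
  rintro ⟨π', h0, hc⟩
  have hE : G.E x (π'.vert 0) := h0 ▸ hxy
  set ρ := Path.consP x π' hE with hρdef
  have hρc : ρ.ConsMin σ' := Path.consP_consMin (fun hm => h0.trans (hmin hm)) hc
  refine le_trans ?_ (le_iSup (fun π : {π : G.Path // π.vert 0 = x ∧ π.ConsMin σ'} =>
    supSigma X π.1) ⟨ρ, rfl, hρc⟩)
  show ((G.w x y : ℝ) : EReal) + supSigma X π' ≤ supSigma X ρ
  apply add_iSup_le_of_forall
  rintro ⟨k, hk⟩
  have hvalid : ∀ i < k + 1, ρ.vert i ∉ X := by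
    intro i hi
    match i with
    | 0 => exact hx
    | (i + 1) => exact hk i (by omega)
  refine le_trans (le_of_eq ?_) (le_iSup (fun k : {k : ℕ // ∀ i < k, ρ.vert i ∉ X} =>
    ((ρ.wsum k.1 : ℝ) : EReal)) ⟨k + 1, hvalid⟩)
  show ((G.w x y : ℝ) : EReal) + ((π'.wsum k : ℝ) : EReal) = ((ρ.wsum (k+1) : ℝ) : EReal)
  rw [Path.consP_wsum, h0]
  norm_cast

lemma bellman_max {G : MPGame V} {X : Set V} {x y : V}
    (hx : x ∉ X) (hmax : ¬ G.IsMin x) (hxy : G.E x y) :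
    ((G.w x y : ℝ) : EReal) + G.supSigmaVal X y ≤ G.supSigmaVal X x := by
  refine le_iInf fun σ' => ?_
  calc ((G.w x y : ℝ) : EReal) + G.supSigmaVal X y
      ≤ ((G.w x y : ℝ) : EReal) +
        ⨆ π' : {π' : G.Path // π'.vert 0 = y ∧ π'.ConsMin σ'.1}, supSigma X π'.1 := by
        exact add_le_add_right (iInf_le _ σ') _
    _ ≤ _ := cons_le_sup hx hxy (fun hm => absurd hm hmax)

lemma exists_repeat {G : MPGame V} [Fintype V] (π : G.Path) (a : ℕ) :
    ∃ i j, a ≤ i ∧ i < j ∧ j ≤ a + Fintype.card V ∧ π.vert i = π.vert j := by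
  have hni : ¬ Function.Injective (fun t : Fin (Fintype.card V + 1) => π.vert (a + t.1)) := by
    intro hinj
    have := Fintype.card_le_of_injective _ hinj
    simp at this
  obtain ⟨s, t, heq, hne⟩ := Function.not_injective_iff.mp hni
  rcases lt_or_gt_of_ne (fun h : s = t => hne (by rw [h])) with h | h
  · exact ⟨a + s.1, a + t.1, by omega, by have := h; omega, by have := t.2; omega, heq⟩
  · exact ⟨a + t.1, a + s.1, by omega, by have := h; omega, by have := s.2; omega, heq.symm⟩

lemma wsum_sub {G : MPGame V} (π : G.Path) {i j : ℕ} (hij : i ≤ j) :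
    π.wsum j - π.wsum i = ∑ t ∈ Finset.Ico i j, G.w (π.vert t) (π.vert (t + 1)) := by
  rw [Finset.sum_Ico_eq_sub _ hij]
  rfl

lemma wsum_Ico_pot {G : MPGame V} (π : G.Path) (φ : V → ℤ) {i j : ℕ} (hij : i ≤ j) :
    ∑ t ∈ Finset.Ico i j, (G.w (π.vert t) (π.vert (t + 1)) + φ (π.vert (t + 1)) - φ (π.vert t))
      = π.wsum j - π.wsum i + φ (π.vert j) - φ (π.vert i) := by
  induction j, hij using Nat.le_induction with
  | base => simp
  | succ j hij ih =>
    rw [Finset.sum_Ico_succ_top (by omega), ih, Path.wsum_succ]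
    ring

lemma growth {G : MPGame V} [Fintype V] (hz : G.NoZeroCycle) (φ : V → ℤ) (π : G.Path)
    (h : ∀ i, 0 ≤ G.w (π.vert i) (π.vert (i + 1)) + φ (π.vert (i + 1)) - φ (π.vert i))
    (n : ℤ) : ∃ k, n ≤ π.wsum k := by
  classical
  set c := Fintype.card V with hc
  set s : ℕ → ℤ := fun k => π.wsum k + φ (π.vert k) - φ (π.vert 0) with hs
  have smono : ∀ i j, i ≤ j → s i ≤ s j := by
    intro i j hij
    have h1 := wsum_Ico_pot π φ hij
    have h2 : 0 ≤ ∑ t ∈ Finset.Ico i j,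
        (G.w (π.vert t) (π.vert (t + 1)) + φ (π.vert (t + 1)) - φ (π.vert t)) :=
      Finset.sum_nonneg fun t _ => h t
    simp only [hs]
    omega
  have swin : ∀ a, s a + 1 ≤ s (a + (c + 1)) := by
    intro a
    obtain ⟨i, j, hai, hij, hjb, heq⟩ := exists_repeat π a
    have h1 : s i ≤ s j := smono i j hij.le
    have h2 : π.wsum i ≠ π.wsum j := hz π i j hij heq
    have h3 : s j - s i = π.wsum j - π.wsum i := by simp only [hs]; rw [heq]; ring
    have h4 : s i + 1 ≤ s j := by omega
    have h5 := smono a i hai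
    have h6 := smono j (a + (c + 1)) (by omega)
    omega
  have slin : ∀ t : ℕ, (t : ℤ) ≤ s (t * (c + 1)) := by
    intro t
    induction t with
    | zero => simp [hs, Path.wsum_zero]
    | succ t ih =>
      have := swin (t * (c + 1))
      have h7 : (t + 1) * (c + 1) = t * (c + 1) + (c + 1) := by ring
      rw [h7]
      push_cast
      omega
  have hne : (Finset.univ : Finset V).Nonempty := ⟨π.vert 0, Finset.mem_univ _⟩
  set B := Finset.univ.sup' hne φ with hB
  have hφB : ∀ y : V, φ y ≤ B := fun y => Finset.le_sup' φ (Finset.mem_univ y)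
  set t : ℕ := (n + B - φ (π.vert 0)).toNat with ht
  refine ⟨t * (c + 1), ?_⟩
  have h8 := slin t
  have h9 : (n + B - φ (π.vert 0)) ≤ (t : ℤ) := Int.self_le_toNat _
  have h10 := hφB (π.vert (t * (c + 1)))
  simp only [hs] at h8
  omega

end MPGame

open MPGame in
/-- extension of Lemma 3a, fixing many vertices at once:
with `F ⊇ N`, `g` the finite `supΣ^N`-values on `F`, `H = G ∖ F` a subgame
with reducing potential `φ_H`, `H⁺ = ZP_{φ_H}`, and `m` the minimum of
`w(vv') + supΣ^N(v') − φ_H(v)` over edges from `H⁺ ∩ V_Min` to `F`: if a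
vertex `v ∈ H⁺` is such that Min has a strategy ensuring, from `v`, that
the play visits only edges of `φ_H`-modified weight `≤ 0` while remaining in
`H⁺` and either stays forever in `H⁺` or exits via a good escape (an edge
from `H⁺` to `F` of value `≤ m`), then `supΣ^N(v) = m + φ_H(v)`. -/
theorem statement15 {V : Type*} [Fintype V] (G : MPGame V)
    (hz : G.NoZeroCycle)
    (F : Set V) (hNF : G.Nset ⊆ F)
    (g : V → ℤ) (hg : ∀ u ∈ F, G.supSigmaVal G.Nset u = ((g u : ℝ) : EReal))
    (hsub : ∀ u ∈ Fᶜ, ∃ u' ∈ Fᶜ, G.E u u')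
    (φH : V → ℤ) (hred : (G.pot φH).ReducedOn Fᶜ)
    (m : ℤ)
    (hmex : ∃ u u', (G.pot φH).ZPr Fᶜ u ∧ G.IsMin u ∧ G.E u u' ∧ u' ∈ F ∧
      G.w u u' + g u' - φH u = m)
    (hmlb : ∀ u u', (G.pot φH).ZPr Fᶜ u → G.IsMin u → G.E u u' → u' ∈ F →
      m ≤ G.w u u' + g u' - φH u)
    (v : V) (hv : (G.pot φH).ZPr Fᶜ v)
    (σ : V → V) (hσ : G.Legal σ)
    (hens : ∀ π : G.Path, π.vert 0 = v → π.ConsMin σ →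
      ∀ i, (∀ j ≤ i, (G.pot φH).ZPr Fᶜ (π.vert j)) →
        (((G.pot φH).ZPr Fᶜ (π.vert (i + 1)) ∧
            G.w (π.vert i) (π.vert (i + 1)) +
              φH (π.vert (i + 1)) - φH (π.vert i) ≤ 0) ∨
         (π.vert (i + 1) ∈ F ∧
            G.w (π.vert i) (π.vert (i + 1)) +
              g (π.vert (i + 1)) - φH (π.vert i) ≤ m))) :
    G.supSigmaVal G.Nset v = ((m + φH v : ℝ) : EReal) := by
  classical
  have hpotw : ∀ a b : V, (G.pot φH).w a b = G.w a b + φH b - φH a := fun _ _ => rfl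
  have hZmem : ∀ x, (G.pot φH).ZPr Fᶜ x → x ∈ Fᶜ := fun x h => h.mem_dom
  have hZN : ∀ x, (G.pot φH).ZPr Fᶜ x → x ∉ G.Nset := fun x h hn => (hZmem x h) (hNF hn)
  have hg0 : ∀ u ∈ F, (0 : ℤ) ≤ g u := by
    intro u hu
    have h1 := supSigmaVal_nonneg G G.Nset u
    rw [hg u hu] at h1
    exact_mod_cast h1
  have hNMin : ∀ x, x ∉ G.Nset → G.IsMin x → ∀ y, G.E x y → 0 ≤ G.w x y := by
    intro x hx hmin y hxy
    by_contra hw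
    exact hx ⟨Set.mem_univ x, Or.inl ⟨hmin, y, Set.mem_univ y, hxy, by omega⟩⟩
  have hNMax : ∀ x, x ∉ G.Nset → ¬ G.IsMin x → ∃ y, G.E x y ∧ 0 ≤ G.w x y := by
    intro x hx hmax
    by_contra hcon
    push_neg at hcon
    exact hx ⟨Set.mem_univ x, Or.inr ⟨hmax, fun y _ hxy => by have := hcon y hxy; omega⟩⟩
  have lowerZ : ∀ z, (G.pot φH).ZPr Fᶜ z →
      (((m + φH z : ℤ) : ℝ) : EReal) ≤ G.supSigmaVal G.Nset z := by
    intro z hz'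
    refine le_iInf ?_
    rintro ⟨σ', hσ'⟩
    have hresp : ∀ y : V, ∃ y', G.E y y' ∧ (G.IsMin y → y' = σ' y) ∧
        (¬ G.IsMin y → (G.pot φH).ZPr Fᶜ y →
          ((G.pot φH).ZPr Fᶜ y' ∧ 0 ≤ G.w y y' + φH y' - φH y)) := by
      intro y
      by_cases hy : ¬ G.IsMin y ∧ (G.pot φH).ZPr Fᶜ y
      · obtain ⟨y', hy'D, hy'E, hy'w, hy'Z⟩ := (hred.2 y hy.2).1 hy.1
        exact ⟨y', hy'E, fun h => absurd h hy.1, fun _ _ => ⟨hy'Z, hy'w⟩⟩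
      · exact ⟨σ' y, hσ' y, fun _ => rfl, fun h1 h2 => absurd ⟨h1, h2⟩ hy⟩
    choose resp hrE hrMin hrZ using hresp
    set f : ℕ → V := fun k => resp^[k] z with hf
    have hfs : ∀ k, f (k + 1) = resp (f k) := fun k => Function.iterate_succ_apply' resp k z
    have hadj : ∀ i, G.E (f i) (f (i + 1)) := fun i => by rw [hfs]; exact hrE (f i)
    set π : G.Path := ⟨f, hadj⟩ with hπdef
    have hπ0 : π.vert 0 = z := rfl
    have hπc : π.ConsMin σ' := by
      intro i hi
      show f (i + 1) = σ' (f i)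
      rw [hfs]; exact hrMin (f i) hi
    by_cases hall : ∀ k, (G.pot φH).ZPr Fᶜ (f k)
    · -- Max keeps the play in ZP forever; sums grow unboundedly
      have hpos : ∀ i, 0 ≤ G.w (π.vert i) (π.vert (i + 1)) + φH (π.vert (i + 1)) -
          φH (π.vert i) := by
        intro i
        show 0 ≤ G.w (f i) (f (i + 1)) + φH (f (i + 1)) - φH (f i)
        by_cases hmin : G.IsMin (f i)
        · exact ((hred.2 (f i) (hall i)).2 hmin (f (i + 1))
            (hZmem _ (hall (i + 1))) (hadj i)).1
        · have h1 := (hrZ (f i) hmin (hall i)).2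
          rw [hfs]; exact h1
      obtain ⟨k, hk⟩ := growth hz φH π hpos (m + φH z)
      refine le_trans ?_ (le_iSup (fun π₁ : {π₁ : G.Path // π₁.vert 0 = z ∧ π₁.ConsMin σ'} =>
        supSigma G.Nset π₁.1) ⟨π, hπ0, hπc⟩)
      have hvalid : ∀ i < k, π.vert i ∉ G.Nset := fun i _ => hZN _ (hall i)
      refine le_trans ?_ (le_iSup (fun k' : {k' : ℕ // ∀ i < k', π.vert i ∉ G.Nset} =>
        ((π.wsum k'.1 : ℝ) : EReal)) ⟨k, hvalid⟩)
      exact_mod_cast hk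
    · push_neg at hall
      have hex : ∃ k, ¬ (G.pot φH).ZPr Fᶜ (f k) := hall
      have hK0pos : Nat.find hex ≠ 0 := by
        intro h
        have h1 := Nat.find_spec hex
        rw [h] at h1
        exact h1 hz'
      obtain ⟨K, hK⟩ : ∃ K, Nat.find hex = K + 1 := ⟨Nat.find hex - 1, by omega⟩
      have hKspec : ¬ (G.pot φH).ZPr Fᶜ (f (K + 1)) := hK ▸ Nat.find_spec hex
      have hbefore : ∀ i ≤ K, (G.pot φH).ZPr Fᶜ (f i) := fun i hi =>
        of_not_not (Nat.find_min hex (by omega))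
      have hZu : (G.pot φH).ZPr Fᶜ (f K) := hbefore K le_rfl
      have hMinu : G.IsMin (f K) := by
        by_contra hmax
        have h1 := (hrZ (f K) hmax hZu).1
        rw [← hfs K] at h1
        exact hKspec h1
      have hu'F : f (K + 1) ∈ F := by
        by_contra hFc
        exact hKspec ((hred.2 (f K) hZu).2 hMinu (f (K + 1)) hFc (hadj K)).2
      have hm1 : m ≤ G.w (f K) (f (K + 1)) + g (f (K + 1)) - φH (f K) :=
        hmlb (f K) (f (K + 1)) hZu hMinu (hadj K) hu'F
      have hpre : ∀ i < K, 0 ≤ G.w (f i) (f (i + 1)) + φH (f (i + 1)) - φH (f i) := by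
        intro i hi
        by_cases hmin : G.IsMin (f i)
        · exact ((hred.2 (f i) (hbefore i (by omega))).2 hmin (f (i + 1))
            (hZmem _ (hbefore (i + 1) (by omega))) (hadj i)).1
        · have h1 := (hrZ (f i) hmin (hbefore i (by omega))).2
          rw [hfs]; exact h1
      have hws : φH z - φH (f K) ≤ π.wsum K := by
        have h3 := wsum_Ico_pot π φH (Nat.zero_le K)
        have h4 : 0 ≤ ∑ t ∈ Finset.Ico 0 K,
            (G.w (π.vert t) (π.vert (t + 1)) + φH (π.vert (t + 1)) - φH (π.vert t)) :=
          Finset.sum_nonneg fun t ht => hpre t (Finset.mem_Ico.mp ht).2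
        rw [h3] at h4
        have h5 : 0 ≤ π.wsum K - π.wsum 0 + φH (f K) - φH z := h4
        have h6 : π.wsum 0 = 0 := Path.wsum_zero π
        omega
      have hval' : ((g (f (K + 1)) : ℝ) : EReal) ≤
          ⨆ π' : {π' : G.Path // π'.vert 0 = f (K + 1) ∧ π'.ConsMin σ'},
            supSigma G.Nset π'.1 := by
        rw [← hg _ hu'F]
        exact iInf_le (fun σ'' : {σ'' : V → V // G.Legal σ''} =>
          ⨆ π' : {π' : G.Path // π'.vert 0 = f (K + 1) ∧ π'.ConsMin σ''.1},
            supSigma G.Nset π'.1) ⟨σ', hσ'⟩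
      have hkey : ∀ π' : {π' : G.Path // π'.vert 0 = f (K + 1) ∧ π'.ConsMin σ'},
          ((π.wsum (K + 1) : ℝ) : EReal) + supSigma G.Nset π'.1 ≤
          ⨆ π₁ : {π₁ : G.Path // π₁.vert 0 = z ∧ π₁.ConsMin σ'}, supSigma G.Nset π₁.1 := by
        rintro ⟨π', h0', hc'⟩
        have hsp : π'.vert 0 = π.vert (K + 1) := h0'
        refine le_trans ?_ (le_iSup (fun π₁ : {π₁ : G.Path // π₁.vert 0 = z ∧
            π₁.ConsMin σ'} => supSigma G.Nset π₁.1)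
          ⟨π.splice (K + 1) π' hsp, by
            rw [Path.splice_vert_of_le π (K + 1) π' hsp (by omega)]; rfl,
            Path.splice_consMin (fun i _ hm => hπc i hm) hc'⟩)
        show ((π.wsum (K + 1) : ℝ) : EReal) + supSigma G.Nset π' ≤
          supSigma G.Nset (π.splice (K + 1) π' hsp)
        apply add_iSup_le_of_forall
        rintro ⟨k', hk'⟩
        have hval2 : ∀ i < (K + 1) + k', (π.splice (K + 1) π' hsp).vert i ∉ G.Nset := by
          intro i hi
          rcases lt_or_ge i (K + 1) with h5 | h5
          · rw [Path.splice_vert_of_le π (K + 1) π' hsp (by omega)]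
            exact hZN _ (hbefore i (by omega))
          · obtain ⟨t, rfl⟩ := Nat.exists_eq_add_of_le h5
            rw [Path.splice_vert_add]
            exact hk' t (by omega)
        refine le_trans (le_of_eq ?_) (le_iSup (fun k'' : {k'' : ℕ //
            ∀ i < k'', (π.splice (K + 1) π' hsp).vert i ∉ G.Nset} =>
          (((π.splice (K + 1) π' hsp).wsum k''.1 : ℝ) : EReal)) ⟨(K + 1) + k', hval2⟩)
        show ((π.wsum (K + 1) : ℝ) : EReal) + ((π'.wsum k' : ℝ) : EReal) =
          (((π.splice (K + 1) π' hsp).wsum ((K + 1) + k') : ℝ) : EReal)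
        rw [Path.splice_wsum]
        norm_cast
      have hfinal : (((m + φH z : ℤ) : ℝ) : EReal) ≤
          ((π.wsum (K + 1) : ℝ) : EReal) + ((g (f (K + 1)) : ℝ) : EReal) := by
        rw [← EReal.coe_add]
        apply EReal.coe_le_coe_iff.mpr
        have h6 : π.wsum (K + 1) = π.wsum K + G.w (f K) (f (K + 1)) := Path.wsum_succ π K
        have h7 : (m + φH z : ℤ) ≤ π.wsum (K + 1) + g (f (K + 1)) := by omega
        exact_mod_cast h7
      refine hfinal.trans ?_
      refine le_trans (add_le_add_right hval' _) ?_
      exact add_iSup_le_of_forall _ _ hkey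
  set R : Set V := {x | ∃ (ρ : G.Path) (t : ℕ), ρ.vert 0 = v ∧ ρ.ConsMin σ ∧
    (∀ j ≤ t, (G.pot φH).ZPr Fᶜ (ρ.vert j)) ∧ ρ.vert t = x} with hRdef
  have hvR : v ∈ R := ⟨sPath G σ hσ v, 0, rfl, sPath_consMin G σ hσ v,
    fun j hj => by rw [Nat.le_zero.mp hj]; exact hv, rfl⟩
  have hRZ : ∀ x ∈ R, (G.pot φH).ZPr Fᶜ x := by
    rintro x ⟨ρ, t, h0, hc, hZ, rfl⟩; exact hZ t le_rfl
  have hRstep : ∀ x ∈ R, ∀ y, G.E x y → (G.IsMin x → y = σ x) →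
      (((G.pot φH).ZPr Fᶜ y ∧ G.w x y + φH y - φH x ≤ 0 ∧ y ∈ R) ∨
        (y ∈ F ∧ G.w x y + g y - φH x ≤ m)) := by
    rintro x ⟨ρ, t, hρ0, hρc, hρZ, rfl⟩ y hxy hminxy
    have hsE : G.E (ρ.vert t) ((sPath G σ hσ y).vert 0) := hxy
    have hχc : (Path.consP (ρ.vert t) (sPath G σ hσ y) hsE).ConsMin σ :=
      Path.consP_consMin (fun hm => hminxy hm) (sPath_consMin G σ hσ y)
    have hχ0 : (Path.consP (ρ.vert t) (sPath G σ hσ y) hsE).vert 0 = ρ.vert t := rfl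
    set χ := Path.consP (ρ.vert t) (sPath G σ hσ y) hsE with hχdef
    set ext := ρ.splice t χ hχ0 with hextdef
    have hext0 : ext.vert 0 = v := by
      rw [Path.splice_vert_of_le ρ t χ hχ0 (Nat.zero_le t)]; exact hρ0
    have hextc : ext.ConsMin σ := Path.splice_consMin (fun i _ hm => hρc i hm) hχc
    have hextZ : ∀ j ≤ t, (G.pot φH).ZPr Fᶜ (ext.vert j) := by
      intro j hj; rw [Path.splice_vert_of_le ρ t χ hχ0 hj]; exact hρZ j hj
    have hvt1 : ext.vert (t + 1) = y := by
      rw [Path.splice_vert_add ρ t χ hχ0 1]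
      rfl
    have hvt : ext.vert t = ρ.vert t := Path.splice_vert_of_le ρ t χ hχ0 le_rfl
    have hd := hens ext hext0 hextc t hextZ
    rw [hvt1, hvt] at hd
    rcases hd with ⟨h1, h2⟩ | ⟨h1, h2⟩
    · refine Or.inl ⟨h1, h2, ext, t + 1, hext0, hextc, ?_, hvt1⟩
      intro j hj
      rcases eq_or_lt_of_le hj with h3 | h3
      · rw [h3, hvt1]; exact h1
      · exact hextZ j (by omega)
    · exact Or.inr ⟨h1, h2⟩
  have LemA : ∀ x ∈ R, 0 ≤ m + φH x := by
    have hesc : ∀ y : V, ∃ y', G.E y y' ∧ (G.IsMin y → y' = σ y) ∧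
        (¬ G.IsMin y → y ∉ G.Nset → 0 ≤ G.w y y') := by
      intro y
      by_cases hmin : G.IsMin y
      · exact ⟨σ y, hσ y, fun _ => rfl, fun h _ => absurd hmin h⟩
      · by_cases hyN : y ∈ G.Nset
        · exact ⟨σ y, hσ y, fun h => absurd h hmin, fun _ h => absurd hyN h⟩
        · obtain ⟨y', hy'E, hy'w⟩ := hNMax y hyN hmin
          exact ⟨y', hy'E, fun h => absurd h hmin, fun _ _ => hy'w⟩
    choose esc hescE hescMin hescW using hesc
    rintro x ⟨ρ, t, hρ0, hρc, hρZ, rfl⟩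
    have hchadj : ∀ i, G.E (esc^[i] (ρ.vert t)) (esc^[i + 1] (ρ.vert t)) := fun i => by
      rw [Function.iterate_succ_apply']; exact hescE _
    set χ : G.Path := ⟨fun i => esc^[i] (ρ.vert t), hchadj⟩ with hχdef
    have hχc : χ.ConsMin σ := by
      intro i hi
      show esc^[i + 1] (ρ.vert t) = σ (esc^[i] (ρ.vert t))
      rw [Function.iterate_succ_apply']
      exact hescMin _ hi
    have hχ0 : χ.vert 0 = ρ.vert t := rfl
    set ext := ρ.splice t χ hχ0 with hextdef
    have hext0 : ext.vert 0 = v := by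
      rw [Path.splice_vert_of_le ρ t χ hχ0 (Nat.zero_le t)]; exact hρ0
    have hextc : ext.ConsMin σ := Path.splice_consMin (fun i _ hm => hρc i hm) hχc
    have hextZt : ∀ j ≤ t, (G.pot φH).ZPr Fᶜ (ext.vert j) := fun j hj => by
      rw [Path.splice_vert_of_le ρ t χ hχ0 hj]; exact hρZ j hj
    have hesc_step : ∀ i, t ≤ i → ext.vert (i + 1) = esc (ext.vert i) := by
      intro i hti
      obtain ⟨s, rfl⟩ := Nat.exists_eq_add_of_le hti
      rw [show t + s + 1 = t + (s + 1) from rfl, Path.splice_vert_add, Path.splice_vert_add]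
      show esc^[s + 1] (ρ.vert t) = esc (esc^[s] (ρ.vert t))
      rw [Function.iterate_succ_apply']
    have hwpos : ∀ i, t ≤ i → (G.pot φH).ZPr Fᶜ (ext.vert i) →
        0 ≤ G.w (ext.vert i) (ext.vert (i + 1)) := by
      intro i hti hZi
      by_cases hmin : G.IsMin (ext.vert i)
      · exact hNMin _ (hZN _ hZi) hmin _ (ext.adj i)
      · rw [hesc_step i hti]
        exact hescW _ hmin (hZN _ hZi)
    by_cases hall : ∀ i, (G.pot φH).ZPr Fᶜ (ext.vert i)
    · exfalso
      have hφ : ∀ i, G.w (ext.vert i) (ext.vert (i + 1)) + φH (ext.vert (i + 1)) -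
          φH (ext.vert i) ≤ 0 := by
        intro i
        rcases hens ext hext0 hextc i (fun j _ => hall j) with ⟨_, h2⟩ | ⟨h1, _⟩
        · exact h2
        · exact absurd h1 (hZmem _ (hall (i + 1)))
      obtain ⟨i, j, hti, hij, hjb, heq⟩ := exists_repeat ext t
      have h1 : 0 ≤ ext.wsum j - ext.wsum i := by
        rw [wsum_sub ext hij.le]
        exact Finset.sum_nonneg fun s hs =>
          hwpos s (le_trans hti (Finset.mem_Ico.mp hs).1) (hall s)
      have h2 := wsum_Ico_pot ext φH hij.le
      have h3 : (∑ s ∈ Finset.Ico i j, (G.w (ext.vert s) (ext.vert (s + 1)) +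
          φH (ext.vert (s + 1)) - φH (ext.vert s))) ≤ 0 :=
        Finset.sum_nonpos fun s _ => hφ s
      rw [h2, heq] at h3
      exact hz ext i j hij heq (by omega)
    · push_neg at hall
      obtain ⟨K, hK⟩ : ∃ K, Nat.find hall = K + 1 := by
        refine ⟨Nat.find hall - 1, ?_⟩
        have h0 : Nat.find hall ≠ 0 := by
          intro h
          have h1 := Nat.find_spec hall
          rw [h, hext0] at h1
          exact h1 hv
        omega
      have hKspec : ¬ (G.pot φH).ZPr Fᶜ (ext.vert (K + 1)) := hK ▸ Nat.find_spec hall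
      have hbefore : ∀ i ≤ K, (G.pot φH).ZPr Fᶜ (ext.vert i) := fun i hi =>
        of_not_not (Nat.find_min hall (by omega))
      have htK : t ≤ K := by
        by_contra hcon
        push_neg at hcon
        exact hKspec (hextZt (K + 1) (by omega))
      rcases hens ext hext0 hextc K (fun j hj => hbefore j hj) with ⟨h1, _⟩ | ⟨h1, h2⟩
      · exact absurd h1 hKspec
      have hwK : 0 ≤ G.w (ext.vert K) (ext.vert (K + 1)) := hwpos K htK (hbefore K le_rfl)
      have hgK := hg0 _ h1
      have hφpre : ∀ i, i < K → G.w (ext.vert i) (ext.vert (i + 1)) +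
          φH (ext.vert (i + 1)) - φH (ext.vert i) ≤ 0 := by
        intro i hi
        rcases hens ext hext0 hextc i (fun j hj => hbefore j (by omega)) with ⟨_, h3⟩ | ⟨h3, _⟩
        · exact h3
        · exact absurd h3 (hZmem _ (hbefore (i + 1) (by omega)))
      have hwpre : 0 ≤ ext.wsum K - ext.wsum t := by
        rw [wsum_sub ext htK]
        exact Finset.sum_nonneg fun s hs => hwpos s (Finset.mem_Ico.mp hs).1
          (hbefore s (by have := (Finset.mem_Ico.mp hs).2; omega))
      have hφsum := wsum_Ico_pot ext φH htK
      have hφsum2 : (∑ s ∈ Finset.Ico t K, (G.w (ext.vert s) (ext.vert (s + 1)) +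
          φH (ext.vert (s + 1)) - φH (ext.vert s))) ≤ 0 :=
        Finset.sum_nonpos fun s hs => hφpre s (Finset.mem_Ico.mp hs).2
      rw [hφsum] at hφsum2
      have hvt : ext.vert t = ρ.vert t := Path.splice_vert_of_le ρ t χ hχ0 le_rfl
      rw [hvt] at hφsum2
      omega
  have hτ : ∀ x : V, ∃ y, G.E x y ∧ ∀ y', G.E x y' →
      ((G.w x y : ℝ) : EReal) + G.supSigmaVal G.Nset y ≤
      ((G.w x y' : ℝ) : EReal) + G.supSigmaVal G.Nset y' := by
    intro x
    have hfin : {y | G.E x y}.Finite := Set.toFinite _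
    have hne : hfin.toFinset.Nonempty := by
      obtain ⟨y, hy⟩ := G.sinkless x
      exact ⟨y, by rw [Set.Finite.mem_toFinset]; exact hy⟩
    obtain ⟨y, hy, hmin⟩ := Finset.exists_min_image hfin.toFinset
      (fun y => ((G.w x y : ℝ) : EReal) + G.supSigmaVal G.Nset y) hne
    rw [Set.Finite.mem_toFinset] at hy
    exact ⟨y, hy, fun y' hy' => hmin y' (by rw [Set.Finite.mem_toFinset]; exact hy')⟩
  choose τ hτE hτmin using hτ
  have hBmin : ∀ x, x ∉ G.Nset → G.IsMin x →
      ((G.w x (τ x) : ℝ) : EReal) + G.supSigmaVal G.Nset (τ x) ≤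
        G.supSigmaVal G.Nset x := by
    intro x hxN hxMin
    refine le_iInf fun σ' => ?_
    refine (hτmin x (σ'.1 x) (σ'.2 x)).trans ?_
    refine le_trans (add_le_add_right (iInf_le _ σ') _) ?_
    exact cons_le_sup hxN (σ'.2 x) (fun _ => rfl)
  set σp : V → V := fun x => if x ∈ R then σ x else τ x with hσp
  have hσpLegal : G.Legal σp := by
    intro x
    by_cases hx : x ∈ R
    · simp only [hσp, if_pos hx]; exact hσ x
    · simp only [hσp, if_neg hx]; exact hτE x
  set W : V → EReal := fun x => if x ∈ R then (((m + φH x : ℤ) : ℝ) : EReal)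
    else G.supSigmaVal G.Nset x with hW
  have hW0 : ∀ x, 0 ≤ W x := by
    intro x
    by_cases hx : x ∈ R
    · simp only [hW, if_pos hx]
      have h1 := LemA x hx
      have h2 : (0 : ℝ) ≤ ((m + φH x : ℤ) : ℝ) := by exact_mod_cast h1
      exact_mod_cast EReal.coe_nonneg.mpr h2
    · simp only [hW, if_neg hx]; exact supSigmaVal_nonneg G G.Nset x
  have hWle : ∀ x, W x ≤ G.supSigmaVal G.Nset x := by
    intro x
    by_cases hx : x ∈ R
    · simp only [hW, if_pos hx]; exact lowerZ x (hRZ x hx)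
    · simp only [hW, if_neg hx]; exact le_rfl
  have hstep : ∀ x y, G.E x y → (G.IsMin x → y = σp x) → x ∉ G.Nset →
      ((G.w x y : ℝ) : EReal) + W y ≤ W x := by
    intro x y hxy hmin hxN
    by_cases hxR : x ∈ R
    · have hmin' : G.IsMin x → y = σ x := by
        intro hm; rw [hmin hm]; simp only [hσp, if_pos hxR]
      rcases hRstep x hxR y hxy hmin' with ⟨hZy, hwφ, hyR⟩ | ⟨hyF, hgood⟩
      · simp only [hW, if_pos hxR, if_pos hyR]
        rw [← EReal.coe_add]
        apply EReal.coe_le_coe_iff.mpr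
        have h9 : (G.w x y + (m + φH y) : ℤ) ≤ m + φH x := by omega
        exact_mod_cast h9
      · have hyR : y ∉ R := fun hyR' => (hZmem y (hRZ y hyR')) hyF
        simp only [hW, if_pos hxR, if_neg hyR]
        rw [hg y hyF, ← EReal.coe_add]
        apply EReal.coe_le_coe_iff.mpr
        have h9 : (G.w x y + g y : ℤ) ≤ m + φH x := by omega
        exact_mod_cast h9
    · simp only [hW, if_neg hxR]
      refine le_trans (add_le_add_right (hWle y) _) ?_
      by_cases hxMin : G.IsMin x
      · have hy : y = τ x := by rw [hmin hxMin]; simp only [hσp, if_neg hxR]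
        rw [hy]; exact hBmin x hxN hxMin
      · exact bellman_max hxN hxMin hxy
  have hinv : ∀ (π : G.Path), π.vert 0 = v → π.ConsMin σp → ∀ k,
      (∀ i < k, π.vert i ∉ G.Nset) →
      ((π.wsum k : ℝ) : EReal) + W (π.vert k) ≤ W v := by
    intro π h0 hc k
    induction k with
    | zero =>
      intro _
      rw [Path.wsum_zero, h0]
      norm_num
    | succ k ih =>
      intro hvalid
      have h1 := ih (fun i hi => hvalid i (by omega))
      have h2 := hstep (π.vert k) (π.vert (k + 1)) (π.adj k) (hc k) (hvalid k (by omega))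
      have h3 : ((π.wsum (k + 1) : ℝ) : EReal) + W (π.vert (k + 1)) =
          ((π.wsum k : ℝ) : EReal) +
            (((G.w (π.vert k) (π.vert (k + 1)) : ℝ) : EReal) + W (π.vert (k + 1))) := by
        rw [Path.wsum_succ]
        push_cast
        rw [add_assoc]
      rw [h3]
      exact le_trans (add_le_add_right h2 _) h1
  have hup : G.supSigmaVal G.Nset v ≤ W v := by
    refine le_trans (iInf_le _ ⟨σp, hσpLegal⟩) ?_
    refine iSup_le ?_
    rintro ⟨π, h0, hc⟩
    refine iSup_le ?_
    rintro ⟨k, hk⟩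
    refine le_trans ?_ (hinv π h0 hc k hk)
    exact le_add_of_nonneg_right (hW0 _)
  have hWv : W v = (((m + φH v : ℤ) : ℝ) : EReal) := by simp only [hW, if_pos hvR]
  have hfin : (((m + φH v : ℤ) : ℝ) : EReal) = ((m + φH v : ℝ) : EReal) := by
    norm_cast
  rw [← hfin]
  exact le_antisymm (hWv ▸ hup) (lowerZ v hv)
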